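/- Under common preferences with |D| = |H| = n and homogeneous arrangement (l,l) with l ≤ n, every agent is matched in the (l,l)-matching: the match rate is 100% and the number of blocking pairs is zero. -/

import Mathlib

/- Formal model of the two-step interview-then-match process of
Echenique-et-al-style markets: Step 1 computes the interview matching by
hospital-proposing deferred acceptance (with responsive, capacity-constrained
choice functions); Step 2 computes the final one-to-one matching by
doctor-proposing deferred acceptance on preferences restricted to interview
partners. -/

open Finset

section Model

variable {D H : Type*} [Fintype D] [Fintype H] [DecidableEq D] [DecidableEq H]

/-- The (at most) `n` best elements of `s` according to `rank` (lower rank = better). -/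
def topN {α : Type*} [DecidableEq α] (rank : α → ℕ) (n : ℕ) (s : Finset α) : Finset α :=
  s.filter fun x => (s.filter fun y => rank y < rank x).card < n

/-- A market: strict preferences represented by rank functions
(lower rank = more preferred) together with acceptability predicates. -/
structure Market (D H : Type*) where
  rankDH : D → H → ℕ
  accD : D → H → Bool
  rankHD : H → D → ℕ
  accH : H → D → Bool

/-- Strict preferences: rank functions are injective. -/
def Market.Strict (M : Market D H) : Prop :=
  (∀ d, Function.Injective (M.rankDH d)) ∧ (∀ h, Function.Injective (M.rankHD h))

/-- Hospital `h` proposes to its `ι h` best acceptable doctors that have not rejected it. -/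
def hProps (M : Market D H) (ι : H → ℕ) (R : Finset (H × D)) (h : H) : Finset D :=
  topN (M.rankHD h) (ι h) (univ.filter fun d => M.accH h d ∧ (h, d) ∉ R)

/-- Doctor `d` keeps her `κ d` best acceptable proposals. -/
def dKeeps (M : Market D H) (ι : H → ℕ) (κ : D → ℕ) (R : Finset (H × D)) (d : D) :
    Finset H :=
  topN (fun h => M.rankDH d h) (κ d) (univ.filter fun h => M.accD d h ∧ d ∈ hProps M ι R h)

/-- One round of hospital-proposing deferred acceptance: the (cumulative) rejection set
grows by the proposals not kept. -/
def iStep (M : Market D H) (ι : H → ℕ) (κ : D → ℕ) (R : Finset (H × D)) :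
    Finset (H × D) :=
  R ∪ univ.filter fun p : H × D => p.2 ∈ hProps M ι R p.1 ∧ p.1 ∉ dKeeps M ι κ R p.2

/-- Rejection set at the end of hospital-proposing DA (interview step). -/
def iRej (M : Market D H) (ι : H → ℕ) (κ : D → ℕ) : Finset (H × D) :=
  (iStep M ι κ)^[Fintype.card D * Fintype.card H] ∅

/-- The interview matching (the hospital-optimal stable many-to-many matching) computed
by hospital-proposing deferred acceptance: pairs `(h, d)` such that `h` interviews `d`. -/
def interviews (M : Market D H) (ι : H → ℕ) (κ : D → ℕ) : Finset (H × D) :=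
  univ.filter fun p : H × D =>
    p.2 ∈ hProps M ι (iRej M ι κ) p.1 ∧ p.1 ∈ dKeeps M ι κ (iRej M ι κ) p.2

/-- Doctor `d` proposes to her best interview partner that has not rejected her. -/
def dProps (M : Market D H) (V : Finset (H × D)) (S : Finset (D × H)) (d : D) :
    Finset H :=
  topN (M.rankDH d) 1 (univ.filter fun h => (h, d) ∈ V ∧ (d, h) ∉ S)

/-- Hospital `h` keeps its best proposal. -/
def hKeeps (M : Market D H) (V : Finset (H × D)) (S : Finset (D × H)) (h : H) :
    Finset D :=
  topN (M.rankHD h) 1 (univ.filter fun d => h ∈ dProps M V S d)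

/-- One round of doctor-proposing DA on preferences restricted to the interview matching `V`. -/
def mStep (M : Market D H) (V : Finset (H × D)) (S : Finset (D × H)) : Finset (D × H) :=
  S ∪ univ.filter fun p : D × H => p.2 ∈ dProps M V S p.1 ∧ p.1 ∉ hKeeps M V S p.2

/-- Rejection set at the end of the doctor-proposing DA of the matching step. -/
def mRej (M : Market D H) (V : Finset (H × D)) : Finset (D × H) :=
  (mStep M V)^[Fintype.card D * Fintype.card H] ∅

/-- The final matching: doctor-proposing DA on preferences restricted to interviews `V`. -/
def finalMatch (M : Market D H) (V : Finset (H × D)) : Finset (D × H) :=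
  univ.filter fun p : D × H =>
    p.2 ∈ dProps M V (mRej M V) p.1 ∧ p.1 ∈ hKeeps M V (mRej M V) p.2

/-- The `(ι,κ)`-matching: the culmination of the two-step process. -/
def ikMatching (M : Market D H) (ι : H → ℕ) (κ : D → ℕ) : Finset (D × H) :=
  finalMatch M (interviews M ι κ)

/-- `(d, h)` is a blocking pair of `μ` (w.r.t. the true, unrestricted preferences). -/
def Blocks (M : Market D H) (μ : Finset (D × H)) (d : D) (h : H) : Prop :=
  M.accD d h ∧ M.accH h d ∧ (d, h) ∉ μ ∧
    (∀ h', (d, h') ∈ μ → M.rankDH d h < M.rankDH d h') ∧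
    (∀ d', (d', h) ∈ μ → M.rankHD h d < M.rankHD h d')

instance (M : Market D H) (μ : Finset (D × H)) (d : D) (h : H) :
    Decidable (Blocks M μ d h) := by
  unfold Blocks; infer_instance

/-- A matching is stable if it admits no blocking pair. -/
def Stable (M : Market D H) (μ : Finset (D × H)) : Prop := ∀ d h, ¬ Blocks M μ d h

/-- `(ι,κ)` is adequate at `M` if the `(ι,κ)`-matching is stable. -/
def Adequate (M : Market D H) (ι : H → ℕ) (κ : D → ℕ) : Prop :=
  Stable M (ikMatching M ι κ)

/-- One-to-one matching (as a set of pairs). -/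
def IsMatching (μ : Finset (D × H)) : Prop :=
  (∀ d h h', (d, h) ∈ μ → (d, h') ∈ μ → h = h') ∧
    (∀ d d' h, (d, h) ∈ μ → (d', h) ∈ μ → d = d')

/-- Common preferences: all doctors rank the hospitals identically, all hospitals rank
the doctors identically, everyone is mutually acceptable (and preferences are strict). -/
def CommonPrefs (M : Market D H) : Prop :=
  M.Strict ∧ (∀ d d', M.rankDH d = M.rankDH d') ∧ (∀ h h', M.rankHD h = M.rankHD h') ∧
    ∀ d h, M.accD d h ∧ M.accH h d

/-- Number of hospitals matched under `μ`. -/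
def matchedHospitals (μ : Finset (D × H)) : ℕ :=
  (univ.filter fun h : H => ∃ d, (d, h) ∈ μ).card

/-- Number of blocking pairs of `μ`. -/
def blockingCount (M : Market D H) (μ : Finset (D × H)) : ℕ :=
  (univ.filter fun p : D × H => Blocks M μ p.1 p.2).card

end Model

/-- `(ι,κ)` is globally adequate: adequate at every (strict) preference profile. -/
def GloballyAdequate (D H : Type*) [Fintype D] [Fintype H] [DecidableEq D] [DecidableEq H]
    (ι : H → ℕ) (κ : D → ℕ) : Prop :=
  ∀ M : Market D H, M.Strict → Adequate M ι κ

variable {D H : Type*} [Fintype D] [Fintype H] [DecidableEq D] [DecidableEq H]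

set_option linter.unusedSectionVars false
section Aux
variable {α : Type*} [Fintype α] [DecidableEq α]

def ridx (f : α → ℕ) (x : α) : ℕ := (univ.filter fun z => f z < f x).card

lemma ridx_lt_ridx (f : α → ℕ) {x y : α} (h : f x < f y) : ridx f x < ridx f y := by
  apply card_lt_card
  constructor
  · intro z hz
    simp only [mem_filter, mem_univ, true_and] at hz ⊢
    omega
  · intro hc
    have := hc (mem_filter.2 ⟨mem_univ x, h⟩)
    simp only [mem_filter, mem_univ, true_and] at this
    omega

lemma ridx_lt_iff (f : α → ℕ) {x y : α} : ridx f x < ridx f y ↔ f x < f y := by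
  constructor
  · intro h
    by_contra hc
    push_neg at hc
    rcases eq_or_lt_of_le hc with h1 | h1
    · have : ridx f y = ridx f x := by unfold ridx; rw [h1]
      omega
    · have := ridx_lt_ridx f h1
      omega
  · exact ridx_lt_ridx f

lemma ridx_lt_card (f : α → ℕ) (x : α) : ridx f x < Fintype.card α := by
  have h : (univ.filter fun z => f z < f x) ⊂ univ := by
    refine (ssubset_iff_of_subset (subset_univ _)).2 ⟨x, mem_univ x, ?_⟩
    simp
  simpa [ridx] using card_lt_card h

lemma ridx_inj (f : α → ℕ) (hf : Function.Injective f) : Function.Injective (ridx f) := by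
  intro x y h
  rcases lt_trichotomy (f x) (f y) with h1 | h1 | h1
  · have := ridx_lt_ridx f h1; omega
  · exact hf h1
  · have := ridx_lt_ridx f h1; omega

lemma ridx_surj (f : α → ℕ) (hf : Function.Injective f) {k : ℕ} (hk : k < Fintype.card α) :
    ∃ x, ridx f x = k := by
  have hbij : Function.Bijective
      (fun x => (⟨ridx f x, ridx_lt_card f x⟩ : Fin (Fintype.card α))) := by
    rw [Fintype.bijective_iff_injective_and_card]
    refine ⟨fun x y hxy => ridx_inj f hf ?_, by simp⟩
    simpa using congrArg Fin.val hxy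
  obtain ⟨x, hx⟩ := hbij.2 ⟨k, hk⟩
  exact ⟨x, by simpa using congrArg Fin.val hx⟩

lemma card_filter_idx (idx : α → ℕ) (n : ℕ) (hb : ∀ x, idx x < n)
    (hinj : Function.Injective idx) (hsurj : ∀ k, k < n → ∃ x, idx x = k)
    (p : ℕ → Prop) [DecidablePred p] :
    (univ.filter fun x => p (idx x)).card = ((range n).filter p).card := by
  apply card_bij (fun x _ => idx x)
  · intro x hx
    simp only [mem_filter, mem_univ, true_and] at hx
    simp only [mem_filter, mem_range]
    exact ⟨hb x, hx⟩
  · intro x hx y hy h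
    exact hinj h
  · intro k hk
    simp only [mem_filter, mem_range] at hk
    obtain ⟨x, hx⟩ := hsurj k hk.1
    refine ⟨x, ?_, hx⟩
    simp only [mem_filter, mem_univ, true_and]
    rw [hx]; exact hk.2

lemma topN_interval (idx rank : α → ℕ) (n : ℕ) (hb : ∀ x, idx x < n)
    (hinj : Function.Injective idx) (hsurj : ∀ k, k < n → ∃ x, idx x = k)
    (hrank : ∀ x y, rank x < rank y ↔ idx x < idx y) (m a b : ℕ) :
    topN rank m (univ.filter fun x => a ≤ idx x ∧ idx x < b) =
      univ.filter fun x => a ≤ idx x ∧ idx x < min b (a + m) := by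
  unfold topN
  rw [filter_filter]
  ext x
  simp only [mem_filter, mem_univ, true_and]
  by_cases hx : a ≤ idx x ∧ idx x < b
  · have hcong : ((univ.filter fun y => a ≤ idx y ∧ idx y < b).filter
        fun y => rank y < rank x)
        = univ.filter fun y => (a ≤ idx y ∧ idx y < b) ∧ idx y < idx x := by
      rw [filter_filter]
      apply filter_congr
      intro y _
      simp [hrank y x]
    have hcard : ((univ.filter fun y => a ≤ idx y ∧ idx y < b).filter
        fun y => rank y < rank x).card = idx x - a := by
      rw [hcong, card_filter_idx idx n hb hinj hsurj (fun k => (a ≤ k ∧ k < b) ∧ k < idx x)]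
      have hset : ((range n).filter fun k => (a ≤ k ∧ k < b) ∧ k < idx x) = Ico a (idx x) := by
        ext k
        simp only [mem_filter, mem_range, mem_Ico]
        have h1 := hb x
        omega
      rw [hset, Nat.card_Ico]
    rw [hcard]
    omega
  · constructor
    · rintro ⟨h1, _⟩; omega
    · rintro ⟨h1, h2⟩; omega

lemma nat_le_div_iff {l : ℕ} (hl : 0 < l) (c x : ℕ) : c ≤ x / l ↔ l * c ≤ x := by
  rw [Nat.le_div_iff_mul_le hl, mul_comm]

lemma uniq_div_mod {l : ℕ} (hl : 0 < l) {x q r : ℕ} (hx : x = l * q + r) (hr : r < l) :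
    x / l = q ∧ x % l = r := by
  subst hx
  constructor
  · rw [Nat.mul_add_div hl, Nat.div_eq_of_lt hr, add_zero]
  · rw [Nat.mul_add_mod, Nat.mod_eq_of_lt hr]

lemma mem_interval_iff {l : ℕ} (hl : 0 < l) (x c m : ℕ) (hm : m < l) :
    (l * c + m ≤ x ∧ x < l * c + l) ↔ (x / l = c ∧ m ≤ x % l) := by
  constructor
  · rintro ⟨h1, h2⟩
    have h3 := uniq_div_mod hl (show x = l * c + (x - l * c) by omega) (by omega)
    omega
  · rintro ⟨h1, h2⟩
    have h3 := Nat.div_add_mod x l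
    have h4 : x % l < l := Nat.mod_lt _ hl
    rw [h1] at h3
    omega

lemma div_eq_iff'' {l : ℕ} (hl : 0 < l) (x c : ℕ) :
    x / l = c ↔ l * c ≤ x ∧ x < l * c + l := by
  have := mem_interval_iff hl x c 0 hl
  omega

end Aux
section AuxDiv

lemma eq_decomp_iff {l : ℕ} (hl : 0 < l) (x q m : ℕ) (hm : m < l) :
    x = l * q + m ↔ (x / l = q ∧ x % l = m) := by
  constructor
  · intro h
    exact uniq_div_mod hl h hm
  · rintro ⟨h1, h2⟩
    have h3 := Nat.div_add_mod x l
    rw [h1, h2] at h3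
    omega

lemma decomp_eq_iff {l : ℕ} (hl : 0 < l) (x y : ℕ) :
    x = y ↔ (x / l = y / l ∧ x % l = y % l) := by
  constructor
  · rintro rfl
    exact ⟨rfl, rfl⟩
  · rintro ⟨h1, h2⟩
    have hx := Nat.div_add_mod x l
    have hy := Nat.div_add_mod y l
    rw [h1, h2] at hx
    omega

end AuxDiv

section Main
variable {D H : Type*} [Fintype D] [Fintype H] [DecidableEq D] [DecidableEq H]

/-- The rejection set after `k` rounds of the interview-step DA. -/
def Rk (l : ℕ) (iD : D → ℕ) (iH : H → ℕ) (k : ℕ) : Finset (H × D) :=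
  univ.filter fun p => iD p.2 / l < iH p.1 / l ∧ iD p.2 / l < k

/-- The rejection set after `k` rounds of the matching-step DA. -/
def Sk (l : ℕ) (iD : D → ℕ) (iH : H → ℕ) (k : ℕ) : Finset (D × H) :=
  univ.filter fun p => iH p.2 / l = iD p.1 / l ∧ iH p.2 % l < iD p.1 % l ∧ iH p.2 % l < k

/-- Bundle of hypotheses: `iD`/`iH` are the common rank indices. -/
structure Good (M : Market D H) (l n : ℕ) (iD : D → ℕ) (iH : H → ℕ) : Prop where
  hl : 0 < l
  hbD : ∀ d, iD d < n
  hbH : ∀ h, iH h < n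
  hinjD : Function.Injective iD
  hinjH : Function.Injective iH
  hsD : ∀ k, k < n → ∃ d, iD d = k
  hsH : ∀ k, k < n → ∃ h, iH h = k
  hrD : ∀ (h : H) (x y : D), M.rankHD h x < M.rankHD h y ↔ iD x < iD y
  hrH : ∀ (d : D) (x y : H), M.rankDH d x < M.rankDH d y ↔ iH x < iH y
  haccD : ∀ d h, M.accD d h
  haccH : ∀ h d, M.accH h d

variable {M : Market D H} {l n : ℕ} {iD : D → ℕ} {iH : H → ℕ}

lemma hProps_Rk (G : Good M l n iD iH) (k : ℕ) (h : H) :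
    hProps M (fun _ => l) (Rk l iD iH k) h =
      univ.filter fun d => iD d / l = min (iH h / l) k := by
  have hbase : (univ.filter fun d => M.accH h d ∧ (h, d) ∉ Rk l iD iH k)
      = univ.filter fun d => l * min (iH h / l) k ≤ iD d ∧ iD d < n := by
    ext d
    simp only [mem_filter, mem_univ, true_and, Rk, G.haccH h d, true_and]
    have h1 := G.hbD d
    have h2 := nat_le_div_iff G.hl (min (iH h / l) k) (iD d)
    omega
  show topN (M.rankHD h) l _ = _
  rw [hbase, topN_interval iD (M.rankHD h) n G.hbD G.hinjD G.hsD (fun x y => G.hrD h x y) l]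
  ext d
  simp only [mem_filter, mem_univ, true_and]
  have h1 := G.hbD d
  have h2 := div_eq_iff'' G.hl (iD d) (min (iH h / l) k)
  omega

lemma dKeeps_Rk (G : Good M l n iD iH) (k : ℕ) (d : D) :
    dKeeps M (fun _ => l) (fun _ => l) (Rk l iD iH k) d =
      univ.filter fun h => iH h / l = iD d / l ∧ iD d / l ≤ k := by
  show topN _ l (univ.filter fun h => M.accD d h ∧ d ∈ hProps M (fun _ => l) (Rk l iD iH k) h) = _
  rcases lt_trichotomy (iD d / l) k with hc | hc | hc
  · have hbase : (univ.filter fun h => M.accD d h ∧ d ∈ hProps M (fun _ => l) (Rk l iD iH k) h)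
        = univ.filter fun h => l * (iD d / l) ≤ iH h ∧ iH h < l * (iD d / l) + l := by
      ext h
      simp only [mem_filter, mem_univ, true_and, G.haccD d h, true_and,
        hProps_Rk G k h]
      have h2 := div_eq_iff'' G.hl (iH h) (iD d / l)
      omega
    rw [hbase, topN_interval iH _ n G.hbH G.hinjH G.hsH (fun x y => G.hrH d x y) l]
    ext h
    simp only [mem_filter, mem_univ, true_and]
    have h2 := div_eq_iff'' G.hl (iH h) (iD d / l)
    omega
  · have hbase : (univ.filter fun h => M.accD d h ∧ d ∈ hProps M (fun _ => l) (Rk l iD iH k) h)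
        = univ.filter fun h => l * (iD d / l) ≤ iH h ∧ iH h < n := by
      ext h
      simp only [mem_filter, mem_univ, true_and, G.haccD d h, true_and,
        hProps_Rk G k h]
      have h2 := nat_le_div_iff G.hl (iD d / l) (iH h)
      have h3 := G.hbH h
      omega
    rw [hbase, topN_interval iH _ n G.hbH G.hinjH G.hsH (fun x y => G.hrH d x y) l]
    ext h
    simp only [mem_filter, mem_univ, true_and]
    have h2 := div_eq_iff'' G.hl (iH h) (iD d / l)
    have h3 := G.hbH h
    omega
  · have hbase : (univ.filter fun h => M.accD d h ∧ d ∈ hProps M (fun _ => l) (Rk l iD iH k) h)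
        = (∅ : Finset H) := by
      ext h
      simp only [mem_filter, mem_univ, true_and, G.haccD d h, true_and,
        hProps_Rk G k h, notMem_empty, iff_false]
      omega
    rw [hbase]
    ext h
    simp only [topN, filter_empty, notMem_empty, false_iff, mem_filter, mem_univ, true_and]
    omega

lemma iStep_Rk (G : Good M l n iD iH) (k : ℕ) :
    iStep M (fun _ => l) (fun _ => l) (Rk l iD iH k) = Rk l iD iH (k + 1) := by
  unfold iStep
  ext p
  obtain ⟨h, d⟩ := p
  simp only [mem_union, mem_filter, mem_univ, true_and]
  rw [hProps_Rk G k h, dKeeps_Rk G k d]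
  simp only [Rk, mem_filter, mem_univ, true_and]
  omega

lemma iRej_eq (G : Good M l n iD iH) :
    iRej M (fun _ => l) (fun _ => l) = Rk l iD iH (Fintype.card D * Fintype.card H) := by
  unfold iRej
  have key : ∀ k, (iStep M (fun _ => l) (fun _ => l))^[k] ∅ = Rk l iD iH k := by
    intro k
    induction k with
    | zero => ext p; simp [Rk]
    | succ k ih => rw [Function.iterate_succ_apply', ih, iStep_Rk G]
  exact key _
lemma interviews_eq (G : Good M l n iD iH) (hK : n ≤ Fintype.card D * Fintype.card H) :
    interviews M (fun _ => l) (fun _ => l) =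
      univ.filter fun p : H × D => iH p.1 / l = iD p.2 / l := by
  unfold interviews
  rw [iRej_eq G]
  ext p
  obtain ⟨h, d⟩ := p
  simp only [mem_filter, mem_univ, true_and]
  rw [hProps_Rk G _ h, dKeeps_Rk G _ d]
  simp only [mem_filter, mem_univ, true_and]
  have h1 := G.hbD d
  have h2 := G.hbH h
  have h3 : iD d / l ≤ iD d := Nat.div_le_self _ _
  have h4 : iH h / l ≤ iH h := Nat.div_le_self _ _
  omega

lemma dProps_Sk (G : Good M l n iD iH) (k : ℕ) (d : D) :
    dProps M (univ.filter fun p : H × D => iH p.1 / l = iD p.2 / l) (Sk l iD iH k) d =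
      univ.filter fun h => iH h = l * (iD d / l) + min (iD d % l) k := by
  show topN (M.rankDH d) 1 _ = _
  have hmod : iD d % l < l := Nat.mod_lt _ G.hl
  have hbase : (univ.filter fun h =>
        (h, d) ∈ (univ.filter fun p : H × D => iH p.1 / l = iD p.2 / l) ∧ (d, h) ∉ Sk l iD iH k)
      = univ.filter fun h =>
          l * (iD d / l) + min (iD d % l) k ≤ iH h ∧ iH h < l * (iD d / l) + l := by
    ext h
    simp only [mem_filter, mem_univ, true_and, Sk]
    have h2 := mem_interval_iff G.hl (iH h) (iD d / l) (min (iD d % l) k) (by omega)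
    omega
  rw [hbase, topN_interval iH (M.rankDH d) n G.hbH G.hinjH G.hsH (fun x y => G.hrH d x y) 1]
  ext h
  simp only [mem_filter, mem_univ, true_and]
  omega

lemma hKeeps_Sk (G : Good M l n iD iH) (k : ℕ) (h : H) :
    hKeeps M (univ.filter fun p : H × D => iH p.1 / l = iD p.2 / l) (Sk l iD iH k) h =
      univ.filter fun d => iD d = iH h ∧ iH h % l ≤ k := by
  show topN (M.rankHD h) 1
    (univ.filter fun d =>
      h ∈ dProps M (univ.filter fun p : H × D => iH p.1 / l = iD p.2 / l) (Sk l iD iH k) d) = _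
  have hmodH : iH h % l < l := Nat.mod_lt _ G.hl
  have hdm := Nat.div_add_mod (iH h) l
  rcases lt_trichotomy (iH h % l) k with hc | hc | hc
  · have hbase : (univ.filter fun d =>
        h ∈ dProps M (univ.filter fun p : H × D => iH p.1 / l = iD p.2 / l) (Sk l iD iH k) d)
        = univ.filter fun d => iH h ≤ iD d ∧ iD d < iH h + 1 := by
      ext d
      simp only [dProps_Sk G k d, mem_filter, mem_univ, true_and]
      have hmodD : iD d % l < l := Nat.mod_lt _ G.hl
      have h2 := eq_decomp_iff G.hl (iH h) (iD d / l) (min (iD d % l) k) (by omega)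
      have h3 := decomp_eq_iff G.hl (iD d) (iH h)
      omega
    rw [hbase, topN_interval iD (M.rankHD h) n G.hbD G.hinjD G.hsD (fun x y => G.hrD h x y) 1]
    ext d
    simp only [mem_filter, mem_univ, true_and]
    omega
  · have hbase : (univ.filter fun d =>
        h ∈ dProps M (univ.filter fun p : H × D => iH p.1 / l = iD p.2 / l) (Sk l iD iH k) d)
        = univ.filter fun d => iH h ≤ iD d ∧ iD d < l * (iH h / l) + l := by
      ext d
      simp only [dProps_Sk G k d, mem_filter, mem_univ, true_and]
      have hmodD : iD d % l < l := Nat.mod_lt _ G.hl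
      have h2 := eq_decomp_iff G.hl (iH h) (iD d / l) (min (iD d % l) k) (by omega)
      have h3 := mem_interval_iff G.hl (iD d) (iH h / l) k (by omega)
      omega
    rw [hbase, topN_interval iD (M.rankHD h) n G.hbD G.hinjD G.hsD (fun x y => G.hrD h x y) 1]
    ext d
    simp only [mem_filter, mem_univ, true_and]
    omega
  · have hbase : (univ.filter fun d =>
        h ∈ dProps M (univ.filter fun p : H × D => iH p.1 / l = iD p.2 / l) (Sk l iD iH k) d)
        = (∅ : Finset D) := by
      ext d
      simp only [dProps_Sk G k d, mem_filter, mem_univ, true_and, notMem_empty, iff_false]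
      have hmodD : iD d % l < l := Nat.mod_lt _ G.hl
      have h2 := eq_decomp_iff G.hl (iH h) (iD d / l) (min (iD d % l) k) (by omega)
      omega
    rw [hbase]
    ext d
    simp only [topN, filter_empty, notMem_empty, false_iff, mem_filter, mem_univ, true_and]
    omega

lemma mStep_Sk (G : Good M l n iD iH) (k : ℕ) :
    mStep M (univ.filter fun p : H × D => iH p.1 / l = iD p.2 / l) (Sk l iD iH k)
      = Sk l iD iH (k + 1) := by
  unfold mStep
  ext p
  obtain ⟨d, h⟩ := p
  simp only [mem_union, mem_filter, mem_univ, true_and]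
  rw [dProps_Sk G k d, hKeeps_Sk G k h]
  simp only [Sk, mem_filter, mem_univ, true_and]
  have h2 := eq_decomp_iff G.hl (iH h) (iD d / l) (min (iD d % l) k)
    (lt_of_le_of_lt (min_le_left _ _) (Nat.mod_lt _ G.hl))
  have h3 := decomp_eq_iff G.hl (iD d) (iH h)
  have h4 : iD d % l < l := Nat.mod_lt _ G.hl
  have h5 : iH h % l < l := Nat.mod_lt _ G.hl
  omega

lemma final_eq (G : Good M l n iD iH) (hK : n ≤ Fintype.card D * Fintype.card H)
    (hln : l ≤ n) :
    ikMatching M (fun _ => l) (fun _ => l) = univ.filter fun p : D × H => iH p.2 = iD p.1 := by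
  unfold ikMatching finalMatch
  rw [interviews_eq G hK]
  have hmrej : mRej M (univ.filter fun p : H × D => iH p.1 / l = iD p.2 / l)
      = Sk l iD iH (Fintype.card D * Fintype.card H) := by
    unfold mRej
    have key : ∀ k, (mStep M (univ.filter fun p : H × D => iH p.1 / l = iD p.2 / l))^[k] ∅
        = Sk l iD iH k := by
      intro k
      induction k with
      | zero => ext p; simp [Sk]
      | succ k ih => rw [Function.iterate_succ_apply', ih, mStep_Sk G]
    exact key _
  rw [hmrej]
  ext p
  obtain ⟨d, h⟩ := p
  simp only [mem_filter, mem_univ, true_and]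
  rw [dProps_Sk G _ d, hKeeps_Sk G _ h]
  simp only [mem_filter, mem_univ, true_and]
  have hdm := Nat.div_add_mod (iD d) l
  have h4 : iD d % l < l := Nat.mod_lt _ G.hl
  have h5 : iH h % l < l := Nat.mod_lt _ G.hl
  omega

end Main
/-- Under common preferences with `|D| = |H|` and homogeneous
arrangement `(l,l)` with `1 ≤ l ≤ |D|`, every agent is matched in the
`(l,l)`-matching (100% match rate) and there are no blocking pairs. -/
theorem balanced_equal_caps_full_match
    (M : Market D H) (hM : CommonPrefs M)
    (hcard : Fintype.card D = Fintype.card H)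
    (l : ℕ) (hl : 1 ≤ l) (hln : l ≤ Fintype.card D) :
    (∀ d : D, ∃ h : H, (d, h) ∈ ikMatching M (fun _ => l) (fun _ => l)) ∧
    (∀ h : H, ∃ d : D, (d, h) ∈ ikMatching M (fun _ => l) (fun _ => l)) ∧
    blockingCount M (ikMatching M (fun _ => l) (fun _ => l)) = 0 := by
  obtain ⟨⟨hinjDH, hinjHD⟩, hDD, hHH, hacc⟩ := hM
  have hD0 : 0 < Fintype.card D := by omega
  have hH0 : 0 < Fintype.card H := by omega
  obtain ⟨d0⟩ := Fintype.card_pos_iff.mp hD0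
  obtain ⟨h0⟩ := Fintype.card_pos_iff.mp hH0
  have G : Good M l (Fintype.card D) (ridx (M.rankHD h0)) (ridx (M.rankDH d0)) := by
    constructor
    · omega
    · intro d; exact ridx_lt_card _ d
    · intro h; rw [hcard]; exact ridx_lt_card _ h
    · exact ridx_inj _ (hinjHD h0)
    · exact ridx_inj _ (hinjDH d0)
    · intro k hk; exact ridx_surj _ (hinjHD h0) hk
    · intro k hk; exact ridx_surj _ (hinjDH d0) (hcard ▸ hk)
    · intro h x y
      rw [hHH h h0]
      exact (ridx_lt_iff (M.rankHD h0)).symm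
    · intro d x y
      rw [hDD d d0]
      exact (ridx_lt_iff (M.rankDH d0)).symm
    · intro d h; exact (hacc d h).1
    · intro h d; exact (hacc d h).2
  have hK : Fintype.card D ≤ Fintype.card D * Fintype.card H :=
    Nat.le_mul_of_pos_right _ hH0
  have hfinal := final_eq G hK hln
  have hmemD : ∀ (d : D) (h : H), (d, h) ∈ ikMatching M (fun _ => l) (fun _ => l) ↔ ridx (M.rankDH d0) h = ridx (M.rankHD h0) d := by
    intro d h
    rw [hfinal]
    simp
  refine ⟨?_, ?_, ?_⟩
  · intro d
    obtain ⟨h, hh⟩ := G.hsH _ (G.hbD d)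
    exact ⟨h, (hmemD d h).mpr hh⟩
  · intro h
    obtain ⟨d, hd⟩ := G.hsD _ (G.hbH h)
    exact ⟨d, (hmemD d h).mpr hd.symm⟩
  · unfold blockingCount
    rw [Finset.card_eq_zero, Finset.filter_eq_empty_iff]
    rintro ⟨d, h⟩ -
    rintro ⟨-, -, hnm, hbd, hbh⟩
    obtain ⟨h', hh'⟩ := G.hsH _ (G.hbD d)
    obtain ⟨d', hd'⟩ := G.hsD _ (G.hbH h)
    have h1 : M.rankDH d h < M.rankDH d h' := hbd h' ((hmemD d h').mpr hh')
    have h2 : M.rankHD h d < M.rankHD h d' := hbh d' ((hmemD d' h).mpr hd'.symm)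
    rw [G.hrH d] at h1
    rw [G.hrD h] at h2
    omega
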